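/- Let η > 0, B > 0, λ < 0 and ρ ∈ ℝ with ρλ > -2 and ρλ ≠ -1. Define Δ_SGD(t) = (η|λ|/(2Bλ))(1 - exp(-2λt)) and Δ_SAM(t) = (η|λ|/(2Bλ(1+ρλ)²))(1 - exp(-2λ(1+ρλ)² t)). Then lim_{t → 0⁺} (Δ_SGD(t) - Δ_SAM(t)) / t² = η λ² |λ| ρ (2 + ρλ) / B; in particular this limit is positive when ρ > 0, and it equals 2η|λ|³ρ/B up to the correction factor (1 + ρλ/2). -/

import Mathlib

open Filter

lemma aux_lhopital (a b c1 c2 : ℝ) (hc : c1 * a = c2 * b) :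
    Tendsto (fun t : ℝ =>
      (c1 * (1 - Real.exp (-a * t)) - c2 * (1 - Real.exp (-b * t))) / t ^ 2)
      (nhdsWithin 0 (Set.Ioi 0)) (nhds ((c2 * b ^ 2 - c1 * a ^ 2) / 2)) := by
  have hinner : Tendsto
      (fun t : ℝ => (c1 * a * Real.exp (-a * t) - c2 * b * Real.exp (-b * t)) / (2 * t))
      (nhdsWithin 0 (Set.Ioi 0)) (nhds ((c2 * b ^ 2 - c1 * a ^ 2) / 2)) := by
    apply HasDerivAt.lhopital_zero_nhdsGT
      (f' := fun t => c1 * a * (-a * Real.exp (-a * t)) - c2 * b * (-b * Real.exp (-b * t)))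
      (g' := fun _ => 2)
    · filter_upwards with t
      have h1 : HasDerivAt (fun t : ℝ => Real.exp (-a * t)) (-a * Real.exp (-a * t)) t := by
        simpa [mul_comm] using ((hasDerivAt_id t).const_mul (-a)).exp
      have h2 : HasDerivAt (fun t : ℝ => Real.exp (-b * t)) (-b * Real.exp (-b * t)) t := by
        simpa [mul_comm] using ((hasDerivAt_id t).const_mul (-b)).exp
      exact ((h1.const_mul (c1 * a)).sub (h2.const_mul (c2 * b)))
    · filter_upwards with t
      simpa using ((hasDerivAt_id t).const_mul (2:ℝ))
    · filter_upwards with t; norm_num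
    · have : Tendsto (fun t : ℝ => c1 * a * Real.exp (-a * t) - c2 * b * Real.exp (-b * t))
          (nhds 0) (nhds (c1 * a * Real.exp 0 - c2 * b * Real.exp 0)) := by
        apply Tendsto.sub <;> apply Tendsto.const_mul <;>
          exact (Real.continuous_exp.tendsto _).comp (by
            exact (continuous_mul_left _).tendsto' _ _ (by simp))
      have := this.mono_left (nhdsWithin_le_nhds (s := Set.Ioi (0:ℝ)))
      simpa [hc] using this
    · have h : Tendsto (fun t : ℝ => 2 * t) (nhds 0) (nhds 0) := by
        exact (continuous_mul_left _).tendsto' _ _ (by simp)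
      exact h.mono_left (nhdsWithin_le_nhds (s := Set.Ioi (0:ℝ)))
    · have : Tendsto (fun t : ℝ =>
          (c1 * a * (-a * Real.exp (-a * t)) - c2 * b * (-b * Real.exp (-b * t))) / 2)
          (nhds 0) (nhds ((c1 * a * (-a * Real.exp 0) - c2 * b * (-b * Real.exp 0)) / 2)) := by
        apply Tendsto.div_const
        apply Tendsto.sub <;> apply Tendsto.const_mul <;> apply Tendsto.const_mul <;>
          exact (Real.continuous_exp.tendsto _).comp (by
            exact (continuous_mul_left _).tendsto' _ _ (by simp))
      have := this.mono_left (nhdsWithin_le_nhds (s := Set.Ioi (0:ℝ)))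
      convert this using 2
      simp; ring
  apply HasDerivAt.lhopital_zero_nhdsGT
    (f' := fun t => c1 * a * Real.exp (-a * t) - c2 * b * Real.exp (-b * t))
    (g' := fun t => 2 * t)
  · filter_upwards with t
    have h1 : HasDerivAt (fun t : ℝ => Real.exp (-a * t)) (-a * Real.exp (-a * t)) t := by
      simpa [mul_comm] using ((hasDerivAt_id t).const_mul (-a)).exp
    have h2 : HasDerivAt (fun t : ℝ => Real.exp (-b * t)) (-b * Real.exp (-b * t)) t := by
      simpa [mul_comm] using ((hasDerivAt_id t).const_mul (-b)).exp
    have := ((((hasDerivAt_const t 1).sub h1).const_mul c1).sub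
      (((hasDerivAt_const t 1).sub h2).const_mul c2))
    exact this.congr_deriv (by ring)
  · filter_upwards with t
    simpa [two_mul] using (hasDerivAt_pow 2 t)
  · filter_upwards [self_mem_nhdsWithin] with t (ht : 0 < t)
    positivity
  · have : Tendsto (fun t : ℝ =>
        c1 * (1 - Real.exp (-a * t)) - c2 * (1 - Real.exp (-b * t)))
        (nhds 0) (nhds (c1 * (1 - Real.exp 0) - c2 * (1 - Real.exp 0))) := by
      apply Tendsto.sub <;> apply Tendsto.const_mul <;> apply Tendsto.const_sub <;>
        exact (Real.continuous_exp.tendsto _).comp (by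
          exact (continuous_mul_left _).tendsto' _ _ (by simp))
    have := this.mono_left (nhdsWithin_le_nhds (s := Set.Ioi (0:ℝ)))
    simpa using this
  · have := ((continuous_pow 2).tendsto (0:ℝ)).mono_left
      (nhdsWithin_le_nhds (s := Set.Ioi (0:ℝ)))
    simpa using this
  · exact hinner

theorem sgd_sam_msd_gap_second_order (η B lam ρ : ℝ)
    (hη : 0 < η) (hB : 0 < B) (hlam : lam < 0)
    (h2 : -2 < ρ * lam) (h1 : ρ * lam ≠ -1) :
    Tendsto
      (fun t : ℝ =>
        (η * |lam| / (2 * B * lam) * (1 - Real.exp (-(2 * lam) * t)) -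
          η * |lam| / (2 * B * lam * (1 + ρ * lam) ^ 2) *
            (1 - Real.exp (-(2 * lam * (1 + ρ * lam) ^ 2) * t))) / t ^ 2)
      (nhdsWithin 0 (Set.Ioi 0))
      (nhds (η * lam ^ 2 * |lam| * ρ * (2 + ρ * lam) / B)) ∧
    (0 < ρ → 0 < η * lam ^ 2 * |lam| * ρ * (2 + ρ * lam) / B) ∧
    η * lam ^ 2 * |lam| * ρ * (2 + ρ * lam) / B =
      2 * η * |lam| ^ 3 * ρ / B * (1 + ρ * lam / 2) := by
  have habs : |lam| = -lam := abs_of_neg hlam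
  have hlam0 : lam ≠ 0 := ne_of_lt hlam
  have hB0 : B ≠ 0 := ne_of_gt hB
  have hfac : (1 : ℝ) + ρ * lam ≠ 0 := by
    intro h; apply h1; linarith
  refine ⟨?_, ?_, ?_⟩
  · have key := aux_lhopital (2 * lam) (2 * lam * (1 + ρ * lam) ^ 2)
      (η * |lam| / (2 * B * lam)) (η * |lam| / (2 * B * lam * (1 + ρ * lam) ^ 2))
      (by field_simp; rw [mul_comm lam ρ]; field_simp)
    convert key using 2
    rw [habs]; field_simp; ring
  · intro hρ
    have h2' : 0 < 2 + ρ * lam := by linarith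
    have : 0 < |lam| := abs_pos.mpr hlam0
    have hl2 : 0 < lam ^ 2 := by positivity
    positivity
  · rw [habs]; field_simp
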